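/- Let (a_n)_{n≥1} be a strictly decreasing sequence of positive real numbers with a_n → 0. Suppose sup_{m > n > 1} (a_{m-1} - a_m)/(a_{n-1} - a_n) < ∞ and limsup_{n→∞} a_{n+1}/a_n = 1. Then there exists a compact set E ⊆ ℝ with positive Lebesgue measure such that there is no bi-Lipschitz map f : ℝ → ℝ with f(a_n) ∈ E for all n ≥ 1. -/

import Mathlib

open MeasureTheory Filter Set

set_option maxHeartbeats 1000000

lemma cross_lemma (p : ℕ → ℝ) (t u h : ℝ) (n : ℕ)
    (hstep : ∀ m, n ≤ m → |p (m + 1) - p m| < h)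
    (ht : Tendsto p atTop (nhds t)) (htu : t ≤ u)
    (hpn : u + h ≤ p n) :
    ∃ m, n ≤ m ∧ u < p m ∧ p m < u + h := by
  classical
  have hh : 0 < h := lt_of_le_of_lt (abs_nonneg _) (hstep n le_rfl)
  have hPex : ∃ m, n ≤ m ∧ p m < u + h := by
    have hev : ∀ᶠ m in atTop, p m < u + h :=
      ht.eventually (eventually_lt_nhds (by linarith))
    exact ((eventually_ge_atTop n).and hev).exists
  let m0 := Nat.find hPex
  have hP0 : n ≤ m0 ∧ p m0 < u + h := Nat.find_spec hPex
  have hgt : n < m0 := by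
    rcases lt_or_eq_of_le hP0.1 with h' | h'
    · exact h'
    · exfalso; rw [← h'] at hP0; linarith [hP0.2]
  obtain ⟨m1, hm1e⟩ : ∃ m1, m0 = m1 + 1 := ⟨m0 - 1, by omega⟩
  have hm1 : n ≤ m1 := by omega
  have h1 : u + h ≤ p m1 := by
    by_contra hc
    exact Nat.find_min hPex (by omega) ⟨hm1, by linarith⟩
  have h3 : -(h) < p (m1+1) - p m1 := (abs_lt.mp (hstep m1 hm1)).1
  refine ⟨m0, hP0.1, ?_, hP0.2⟩
  rw [hm1e]; linarith

theorem stmt6 (a : ℕ → ℝ) (hpos : ∀ n ≥ 1, 0 < a n)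
    (hdec : ∀ n ≥ 1, a (n + 1) < a n)
    (hlim : Tendsto a atTop (nhds 0))
    (hsup : ∃ C : ℝ, ∀ m n : ℕ, 1 < n → n < m →
      (a (m - 1) - a m) / (a (n - 1) - a n) ≤ C)
    (hlimsup : Filter.limsup (fun n => a (n + 1) / a n) atTop = 1) :
    ∃ E : Set ℝ, IsCompact E ∧ 0 < volume E ∧
      ¬ ∃ f : ℝ → ℝ, (∃ L : ℝ, 1 < L ∧ ∀ x y : ℝ,
          L⁻¹ * |x - y| ≤ |f x - f y| ∧ |f x - f y| ≤ L * |x - y|) ∧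
        ∀ n ≥ 1, f (a n) ∈ E := by
  classical
  obtain ⟨C0, hC0⟩ := hsup
  set C : ℝ := max C0 1 with hCdef
  have hC1 : (1:ℝ) ≤ C := le_max_right _ _
  have hCpos : (0:ℝ) < C := lt_of_lt_of_le one_pos hC1
  -- gap comparison from hsup
  have hgap : ∀ m n : ℕ, 1 ≤ n → n < m → a m - a (m+1) ≤ C * (a n - a (n+1)) := by
    intro m n hn hnm
    have h := hC0 (m+1) (n+1) (by omega) (by omega)
    simp only [Nat.add_sub_cancel] at h
    have hden : 0 < a n - a (n+1) := by
      have := hdec n hn; linarith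
    have h2 := (div_le_iff₀ hden).mp (h.trans (le_max_left C0 1))
    linarith
  -- picking good indices
  have hpick : ∀ j : ℕ, ∃ n : ℕ, 2 ≤ n ∧ a n ≤ 1 ∧
      a n - a (n + 1) ≤ (2:ℝ)⁻¹ ^ (9*j+9) / C * a n := by
    intro j
    set θ : ℝ := (2:ℝ)⁻¹ ^ (9*j+9) / C with hθdef
    have hθpos : 0 < θ := div_pos (pow_pos (by norm_num) _) hCpos
    have hcob : IsCoboundedUnder (· ≤ ·) atTop (fun n => a (n+1) / a n) := by
      refine ⟨0, fun b hb => ?_⟩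
      have hb' : ∀ᶠ n in atTop, a (n+1) / a n ≤ b := eventually_map.mp hb
      obtain ⟨n, hn1, hn2⟩ := (hb'.and (eventually_ge_atTop 1)).exists
      have h0 : 0 ≤ a (n+1) / a n :=
        div_nonneg (hpos (n+1) (by omega)).le (hpos n hn2).le
      linarith
    have hfreq : ∃ᶠ n in atTop, 1 - θ < a (n+1) / a n := by
      apply frequently_lt_of_lt_limsup (hu := hcob)
      rw [hlimsup]; linarith
    have h1 : ∀ᶠ n : ℕ in atTop, a n < 1 :=
      hlim.eventually (eventually_lt_nhds (by norm_num))
    have hev : ∀ᶠ n : ℕ in atTop, 2 ≤ n ∧ a n ≤ 1 := by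
      filter_upwards [eventually_ge_atTop 2, h1] with n hn hn' using ⟨hn, hn'.le⟩
    obtain ⟨n, hn1, hn2, hn3⟩ := (hfreq.and_eventually hev).exists
    refine ⟨n, hn2, hn3, ?_⟩
    have hA : 0 < a n := hpos n (by omega)
    have h2 : (1 - θ) * a n < a (n+1) := (lt_div_iff₀ hA).mp hn1
    nlinarith
  choose nn hnn2 hnn1 hnng using hpick
  have hA0 : ∀ j, 0 < a (nn j) := fun j => hpos _ (by have := hnn2 j; omega)
  have hg0 : ∀ j, 0 < a (nn j) - a (nn j + 1) := fun j => by
    have := hdec (nn j) (by have := hnn2 j; omega); linarith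
  set c : ℕ → ℝ := fun j => (4:ℝ)^(j+2) * C * ((a (nn j) - a (nn j + 1)) / a (nn j)) with hcdef
  have hcpos : ∀ j, 0 < c j := fun j =>
    mul_pos (mul_pos (pow_pos four_pos _) hCpos) (div_pos (hg0 j) (hA0 j))
  have hcle : ∀ j, c j ≤ (2:ℝ)⁻¹ ^ (7*j+5) := by
    intro j
    have h1 : (a (nn j) - a (nn j + 1)) / a (nn j) ≤ (2:ℝ)⁻¹ ^ (9*j+9) / C :=
      (div_le_iff₀ (hA0 j)).mpr (hnng j)
    calc c j ≤ (4:ℝ)^(j+2) * C * ((2:ℝ)⁻¹ ^ (9*j+9) / C) := by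
          apply mul_le_mul_of_nonneg_left h1 (by positivity)
      _ = (4:ℝ)^(j+2) * (2:ℝ)⁻¹ ^ (9*j+9) := by
          field_simp
      _ = (2:ℝ)⁻¹ ^ (7*j+5) := by
          rw [show 9*j+9 = 2*(j+2) + (7*j+5) by ring,
            pow_add ((2:ℝ)⁻¹) (2*(j+2)) (7*j+5), pow_mul,
            show ((2:ℝ)⁻¹)^2 = 4⁻¹ by norm_num, ← mul_assoc, ← mul_pow]
          norm_num
  have hc1 : ∀ j, c j ≤ 1 := fun j =>
    (hcle j).trans (pow_le_one₀ (by norm_num) (by norm_num))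
  -- scales
  have hkex : ∀ j : ℕ, ∃ k : ℕ, 4 * (2:ℝ)⁻¹ ^ k ≤ a (nn j) := by
    intro j
    obtain ⟨k, hk⟩ := exists_pow_lt_of_lt_one (show (0:ℝ) < a (nn j) / 4 from div_pos (hA0 j) (by norm_num))
      (show (2:ℝ)⁻¹ < 1 by norm_num)
    refine ⟨k, ?_⟩
    rw [lt_div_iff₀ (by norm_num : (0:ℝ) < 4)] at hk
    linarith
  set kj : ℕ → ℕ := fun j => Nat.find (hkex j) with hkjdef
  have hkjspec : ∀ j, 4 * (2:ℝ)⁻¹ ^ (kj j) ≤ a (nn j) := fun j => Nat.find_spec (hkex j)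
  -- the bad set
  set U : Set ℝ := ⋃ (j : ℕ), ⋃ (k ∈ Finset.Icc (kj j) (kj j + j)), ⋃ (i ∈ Finset.range (2^k + 2)),
      Ioo ((i:ℝ) * (2:ℝ)⁻¹ ^ k) ((i:ℝ) * (2:ℝ)⁻¹ ^ k + c j * (2:ℝ)⁻¹ ^ k) with hUdef
  have hUopen : IsOpen U :=
    isOpen_iUnion fun j => isOpen_biUnion fun k _ => isOpen_biUnion fun i _ => isOpen_Ioo
  refine ⟨Icc 0 1 \ U, isCompact_Icc.diff hUopen, ?_, ?_⟩
  · -- positive measure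
    have hvolU : volume U ≤ ENNReal.ofReal (1/4) := by
      have hVj : ∀ j : ℕ,
          volume (⋃ (k ∈ Finset.Icc (kj j) (kj j + j)), ⋃ (i ∈ Finset.range (2^k + 2)),
            Ioo ((i:ℝ) * (2:ℝ)⁻¹ ^ k) ((i:ℝ) * (2:ℝ)⁻¹ ^ k + c j * (2:ℝ)⁻¹ ^ k))
          ≤ ENNReal.ofReal ((2:ℝ)⁻¹ ^ (j+3)) := by
        intro j
        have hterm : ∀ k : ℕ,
            volume (⋃ (i ∈ Finset.range (2^k + 2)),
              Ioo ((i:ℝ) * (2:ℝ)⁻¹ ^ k) ((i:ℝ) * (2:ℝ)⁻¹ ^ k + c j * (2:ℝ)⁻¹ ^ k))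
            ≤ ENNReal.ofReal (3 * c j) := by
          intro k
          calc volume (⋃ (i ∈ Finset.range (2^k + 2)),
                Ioo ((i:ℝ) * (2:ℝ)⁻¹ ^ k) ((i:ℝ) * (2:ℝ)⁻¹ ^ k + c j * (2:ℝ)⁻¹ ^ k))
              ≤ ∑ i ∈ Finset.range (2^k + 2), volume
                (Ioo ((i:ℝ) * (2:ℝ)⁻¹ ^ k) ((i:ℝ) * (2:ℝ)⁻¹ ^ k + c j * (2:ℝ)⁻¹ ^ k)) :=
                measure_biUnion_finset_le _ _
            _ = ∑ i ∈ Finset.range (2^k + 2), ENNReal.ofReal (c j * (2:ℝ)⁻¹ ^ k) := by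
                simp [Real.volume_Ioo]
            _ = ENNReal.ofReal (((2^k + 2 : ℕ) : ℝ) * (c j * (2:ℝ)⁻¹ ^ k)) := by
                rw [Finset.sum_const, Finset.card_range,
                  ENNReal.ofReal_mul (Nat.cast_nonneg _), ENNReal.ofReal_natCast, nsmul_eq_mul]
            _ ≤ ENNReal.ofReal (3 * c j) := by
                apply ENNReal.ofReal_le_ofReal
                have e1 : ((2^k + 2 : ℕ) : ℝ) = (2:ℝ)^k + 2 := by push_cast; ring
                have e2 : (2:ℝ)^k * (2:ℝ)⁻¹ ^ k = 1 := by
                  rw [inv_pow, mul_inv_cancel₀ (by positivity)]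
                have e3 : (2:ℝ)⁻¹ ^ k ≤ 1 := pow_le_one₀ (by norm_num) (by norm_num)
                have hc := (hcpos j).le
                rw [e1]
                nlinarith
        calc volume (⋃ (k ∈ Finset.Icc (kj j) (kj j + j)), ⋃ (i ∈ Finset.range (2^k + 2)),
              Ioo ((i:ℝ) * (2:ℝ)⁻¹ ^ k) ((i:ℝ) * (2:ℝ)⁻¹ ^ k + c j * (2:ℝ)⁻¹ ^ k))
            ≤ ∑ k ∈ Finset.Icc (kj j) (kj j + j), volume (⋃ (i ∈ Finset.range (2^k + 2)),
              Ioo ((i:ℝ) * (2:ℝ)⁻¹ ^ k) ((i:ℝ) * (2:ℝ)⁻¹ ^ k + c j * (2:ℝ)⁻¹ ^ k)) :=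
              measure_biUnion_finset_le _ _
          _ ≤ ∑ k ∈ Finset.Icc (kj j) (kj j + j), ENNReal.ofReal (3 * c j) :=
              Finset.sum_le_sum fun k _ => hterm k
          _ = ENNReal.ofReal (((j+1 : ℕ) : ℝ) * (3 * c j)) := by
              rw [Finset.sum_const, Nat.card_Icc, show kj j + j + 1 - kj j = j + 1 from by omega,
                ENNReal.ofReal_mul (Nat.cast_nonneg _), ENNReal.ofReal_natCast, nsmul_eq_mul]
          _ ≤ ENNReal.ofReal ((2:ℝ)⁻¹ ^ (j+3)) := by
              apply ENNReal.ofReal_le_ofReal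
              have hj : ((j:ℝ)+1) ≤ 2^j := by
                exact_mod_cast Nat.succ_le_of_lt (Nat.lt_two_pow_self (n := j))
              have h62 : (2:ℝ)^j ≤ 2^(6*j) := by
                apply pow_le_pow_right₀ (by norm_num); omega
              have key : 3*((j:ℝ)+1) * (2:ℝ)⁻¹ ^ (7*j+5) ≤ (2:ℝ)⁻¹ ^ (j+3) := by
                rw [show 7*j+5 = (6*j+2)+(j+3) by ring, pow_add ((2:ℝ)⁻¹) (6*j+2) (j+3)]
                have e4 : (2:ℝ)^(6*j+2) * (2:ℝ)⁻¹ ^ (6*j+2) = 1 := by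
                  rw [inv_pow, mul_inv_cancel₀ (by positivity)]
                have h5 : 3*((j:ℝ)+1) ≤ (2:ℝ)^(6*j+2) := by
                  rw [pow_add]
                  nlinarith
                have p2 : (0:ℝ) < (2:ℝ)⁻¹ ^ (j+3) := by positivity
                calc 3*((j:ℝ)+1) * ((2:ℝ)⁻¹ ^ (6*j+2) * (2:ℝ)⁻¹ ^ (j+3))
                    ≤ (2:ℝ)^(6*j+2) * ((2:ℝ)⁻¹ ^ (6*j+2) * (2:ℝ)⁻¹ ^ (j+3)) := by
                      apply mul_le_mul_of_nonneg_right h5 (by positivity)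
                  _ = (2:ℝ)⁻¹ ^ (j+3) := by rw [← mul_assoc, e4, one_mul]
              have hcj := hcle j
              have hcp := (hcpos j).le
              push_cast
              nlinarith [pow_nonneg (show (0:ℝ) ≤ 2⁻¹ by norm_num) (7*j+5)]
      calc volume U ≤ ∑' j : ℕ, volume (⋃ (k ∈ Finset.Icc (kj j) (kj j + j)),
            ⋃ (i ∈ Finset.range (2^k + 2)),
            Ioo ((i:ℝ) * (2:ℝ)⁻¹ ^ k) ((i:ℝ) * (2:ℝ)⁻¹ ^ k + c j * (2:ℝ)⁻¹ ^ k)) :=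
            measure_iUnion_le _
        _ ≤ ∑' j : ℕ, ENNReal.ofReal ((2:ℝ)⁻¹ ^ (j+3)) := ENNReal.tsum_le_tsum hVj
        _ = ENNReal.ofReal (∑' j : ℕ, (2:ℝ)⁻¹ ^ (j+3)) := by
            refine (ENNReal.ofReal_tsum_of_nonneg (f := fun j : ℕ => (2:ℝ)⁻¹ ^ (j+3))
              (fun j => by positivity) ?_).symm
            apply Summable.congr ((summable_geometric_of_lt_one (show (0:ℝ) ≤ 2⁻¹ by norm_num)
              (by norm_num)).mul_right ((2:ℝ)⁻¹ ^ 3))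
            intro b
            rw [← pow_add]
        _ = ENNReal.ofReal (1/4) := by
            congr 1
            have h := tsum_geometric_of_lt_one (show (0:ℝ) ≤ 2⁻¹ by norm_num) (by norm_num)
            calc ∑' j : ℕ, (2:ℝ)⁻¹ ^ (j+3) = ∑' j : ℕ, (2:ℝ)⁻¹ ^ j * (2:ℝ)⁻¹ ^ 3 := by
                  apply tsum_congr; intro b; rw [← pow_add]
              _ = (∑' j : ℕ, (2:ℝ)⁻¹ ^ j) * (2:ℝ)⁻¹ ^ 3 := tsum_mul_right
              _ = 1/4 := by rw [h]; norm_num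
    by_contra h0
    push_neg at h0
    have hE0 : volume (Icc (0:ℝ) 1 \ U) = 0 := le_antisymm h0 zero_le
    have hsub : Icc (0:ℝ) 1 ⊆ (Icc (0:ℝ) 1 \ U) ∪ U := fun x hx => by
      by_cases hxu : x ∈ U
      · exact Or.inr hxu
      · exact Or.inl ⟨hx, hxu⟩
    have h2 : (1:ENNReal) ≤ ENNReal.ofReal (1/4) := by
      calc (1:ENNReal) = volume (Icc (0:ℝ) 1) := by simp [Real.volume_Icc]
        _ ≤ volume ((Icc (0:ℝ) 1 \ U) ∪ U) := measure_mono hsub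
        _ ≤ volume (Icc (0:ℝ) 1 \ U) + volume U := measure_union_le _ _
        _ ≤ 0 + ENNReal.ofReal (1/4) := add_le_add (le_of_eq hE0) hvolU
        _ = ENNReal.ofReal (1/4) := by rw [zero_add]
    exact absurd (lt_of_le_of_lt h2 (ENNReal.ofReal_lt_one.mpr (by norm_num)))
      (lt_irrefl _)
  · -- no bi-Lipschitz embedding
    rintro ⟨f, ⟨L, hL, hf⟩, himg⟩
    have hLpos : (0:ℝ) < L := lt_trans one_pos hL
    set p : ℕ → ℝ := fun m => f (a m) with hpdef
    have hanti : ∀ n m : ℕ, 1 ≤ n → n ≤ m → a m ≤ a n := by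
      intro n m h1 hm
      induction m, hm using Nat.le_induction with
      | base => exact le_refl _
      | succ m hm ih => exact le_trans (hdec m (by omega)).le ih
    have hlipf : LipschitzWith (Real.toNNReal L) f := by
      apply LipschitzWith.of_dist_le_mul
      intro x y
      rw [Real.dist_eq, Real.dist_eq, Real.coe_toNNReal L hLpos.le]
      exact (hf x y).2
    obtain ⟨t, ht⟩ := cauchySeq_tendsto_of_complete
      (hlipf.uniformContinuous.comp_cauchySeq hlim.cauchySeq)
    have htp : Tendsto p atTop (nhds t) := ht
    have htmem : t ∈ Icc (0:ℝ) 1 := by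
      apply isClosed_Icc.mem_of_tendsto htp
      filter_upwards [eventually_ge_atTop 1] with m hm
      exact (himg m hm).1
    obtain ⟨j, hj⟩ := pow_unbounded_of_one_lt L (show (1:ℝ) < 2 by norm_num)
    set n := nn j with hndef
    have hn2 : 2 ≤ n := hnn2 j
    have hA : 0 < a n := hA0 j
    have hA1 : a n ≤ 1 := hnn1 j
    have hgpos : 0 < a n - a (n+1) := hg0 j
    -- choose the scale k
    have hkex2 : ∃ k : ℕ, 4 * L * (2:ℝ)⁻¹ ^ k ≤ a n := by
      obtain ⟨k, hk⟩ := exists_pow_lt_of_lt_one (show (0:ℝ) < a n / (4*L) by positivity)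
        (show (2:ℝ)⁻¹ < 1 by norm_num)
      refine ⟨k, ?_⟩
      rw [lt_div_iff₀ (by positivity)] at hk
      linarith
    set k := Nat.find hkex2 with hkdef2
    have hk1 : 4 * L * (2:ℝ)⁻¹ ^ k ≤ a n := Nat.find_spec hkex2
    set δ : ℝ := (2:ℝ)⁻¹ ^ k with hδdef
    have hδpos : 0 < δ := by positivity
    have hk0 : k ≠ 0 := by
      intro hke
      have hδ1 : δ = 1 := by rw [hδdef, hke, pow_zero]
      rw [hδ1] at hδpos
      have := hk1
      rw [hδdef, hke, pow_zero, mul_one] at this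
      nlinarith
    have hδ2 : a n < 8 * L * δ := by
      have hmin := Nat.find_min hkex2 (show k - 1 < k by omega)
      push_neg at hmin
      obtain ⟨k1, hk1e⟩ : ∃ k1, k = k1 + 1 := ⟨k - 1, by omega⟩
      have e1 : δ = 2⁻¹ * (2:ℝ)⁻¹ ^ (k - 1) := by
        rw [hδdef, hk1e, pow_succ', show k1 + 1 - 1 = k1 from by omega]
      rw [e1]
      linarith [hmin]
    have hkw1 : kj j ≤ k := by
      apply Nat.find_le
      nlinarith [hk1, hδpos, hL]
    have hkw2 : k ≤ kj j + j := by
      apply Nat.find_le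
      have h1 : 4 * (2:ℝ)⁻¹ ^ (kj j) ≤ a n := hkjspec j
      have h3 : L * (2:ℝ)⁻¹ ^ j ≤ 1 := by
        rw [inv_pow, ← div_eq_mul_inv, div_le_one (by positivity)]
        exact hj.le
      have h4 := mul_le_mul h1 h3 (by positivity) hA.le
      rw [pow_add]
      nlinarith [h4]
    -- step bound
    have hstep : ∀ m, n ≤ m → |p (m+1) - p m| ≤ L * (C * (a n - a (n+1))) := by
      intro m hm
      have h1 : |p (m+1) - p m| ≤ L * |a (m+1) - a m| := (hf _ _).2
      have hm1 : 1 ≤ m := by omega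
      have h2 : |a (m+1) - a m| = a m - a (m+1) := by
        rw [abs_sub_comm, abs_of_nonneg (by linarith [hdec m hm1])]
      have h3 : a m - a (m+1) ≤ C * (a n - a (n+1)) := by
        rcases eq_or_lt_of_le hm with he | hlt
        · rw [← he]; nlinarith
        · exact hgap m n (by omega) hlt
      rw [h2] at h1
      calc |p (m+1) - p m| ≤ L * (a m - a (m+1)) := h1
        _ ≤ L * (C * (a n - a (n+1))) := by nlinarith
    have hCg : 0 < C * (a n - a (n+1)) := mul_pos hCpos hgpos
    have hsh : L * (C * (a n - a (n+1))) < c j * δ := by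
      have hcj : c j * a n = (4:ℝ)^(j+2) * C * (a n - a (n+1)) := by
        rw [hcdef]
        field_simp
        rw [hndef, mul_div_assoc, div_self (hA0 j).ne', mul_one]
      have hL2 : 8 * L^2 ≤ (4:ℝ)^(j+2) := by
        have h1 : L^2 ≤ ((2:ℝ)^j)^2 := by nlinarith [hLpos, hj]
        have h2 : ((2:ℝ)^j)^2 = (4:ℝ)^j := by
          rw [← pow_mul, mul_comm, pow_mul]; norm_num
        have h3 : (4:ℝ)^(j+2) = 16 * 4^j := by rw [pow_add]; ring
        nlinarith [pow_pos (show (0:ℝ) < 4 by norm_num) j]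
      have key : L * a n < (4:ℝ)^(j+2) * δ := by
        nlinarith [mul_lt_mul_of_pos_left hδ2 hLpos, mul_le_mul_of_nonneg_right hL2 hδpos.le]
      have h5 : (L * (C * (a n - a (n+1)))) * a n < (c j * δ) * a n := by
        have e : (c j * δ) * a n = (4:ℝ)^(j+2) * C * (a n - a (n+1)) * δ := by
          rw [mul_right_comm, hcj]
        rw [e]
        nlinarith [mul_lt_mul_of_pos_left key hCg]
      exact lt_of_mul_lt_mul_right h5 hA.le
    -- distance to limit
    have hdistlow : L⁻¹ * a n ≤ |p n - t| := by
      have hev : ∀ᶠ m in atTop, L⁻¹ * (a n - a m) ≤ |p n - p m| := by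
        filter_upwards [eventually_ge_atTop n] with m hm
        have h1 := (hf (a n) (a m)).1
        rwa [abs_of_nonneg (by linarith [hanti n m (by omega) hm])] at h1
      have h2 : Tendsto (fun m => L⁻¹ * (a n - a m)) atTop (nhds (L⁻¹ * (a n - 0))) :=
        (tendsto_const_nhds.sub hlim).const_mul _
      have h3 : Tendsto (fun m => |p n - p m|) atTop (nhds (|p n - t|)) :=
        (tendsto_const_nhds.sub htp).abs
      have := le_of_tendsto_of_tendsto h2 h3 hev
      simpa using this
    have h4δ : 4 * δ ≤ L⁻¹ * a n := by
      rw [inv_mul_eq_div, le_div_iff₀ hLpos]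
      nlinarith [hk1]
    have ht0 : 0 ≤ t := htmem.1
    have ht1 : t ≤ 1 := htmem.2
    have hpE : ∀ m, 1 ≤ m → p m ∈ Icc (0:ℝ) 1 \ U := fun m hm => himg m hm
    have hc1j : c j ≤ 1 := hc1 j
    have hcδpos : 0 < c j * δ := mul_pos (hcpos j) hδpos
    have hstep' : ∀ m, n ≤ m → |p (m+1) - p m| < c j * δ :=
      fun m hm => lt_of_le_of_lt (hstep m hm) hsh
    have epow : (2:ℝ)^k * δ = 1 := by
      rw [hδdef, inv_pow, mul_inv_cancel₀ (by positivity)]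
    have htδ : t / δ ≤ ((2^k : ℕ) : ℝ) := by
      rw [div_le_iff₀ hδpos]
      push_cast
      nlinarith [epow, ht0, ht1]
    have hpne : p n ≠ t := by
      intro he
      rw [he, sub_self, abs_zero] at hdistlow
      nlinarith [inv_pos.mpr hLpos]
    rcases lt_or_gt_of_ne hpne with hplt | hpgt
    · -- p n < t : mirrored crossing below t
      have hd : t - p n ≥ 4 * δ := by
        have habs : |p n - t| = t - p n := by rw [abs_sub_comm]; exact abs_of_pos (by linarith)
        nlinarith [hdistlow, h4δ]
      have hp0 : 0 ≤ p n := (hpE n (by omega)).1.1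
      have ht4 : 4 * δ ≤ t := by linarith
      have hceil4 : 4 ≤ ⌈t/δ⌉₊ := by
        have h1 : (4:ℝ) ≤ t/δ := (le_div_iff₀ hδpos).mpr (by linarith)
        have h2 : (4:ℝ) ≤ (⌈t/δ⌉₊ : ℝ) := h1.trans (Nat.le_ceil _)
        exact_mod_cast h2
      set i : ℕ := ⌈t/δ⌉₊ - 2 with hidef
      have hicast : (i:ℝ) = (⌈t/δ⌉₊ : ℝ) - 2 := by
        rw [hidef, Nat.cast_sub (by omega)]
        norm_num
      have hceillt : (⌈t/δ⌉₊ : ℝ) < t/δ + 1 := Nat.ceil_lt_add_one (by positivity)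
      have hceilge : t/δ ≤ (⌈t/δ⌉₊ : ℝ) := Nat.le_ceil _
      have htd : t = t/δ * δ := (div_mul_cancel₀ t hδpos.ne').symm
      have hu1 : (i:ℝ)*δ + c j * δ ≤ t := by
        have : (i:ℝ)*δ < t - δ := by
          rw [hicast]
          calc ((⌈t/δ⌉₊ : ℝ) - 2) * δ < (t/δ + 1 - 2) * δ := by
                apply mul_lt_mul_of_pos_right (by linarith) hδpos
            _ = t - δ := by rw [sub_mul, add_mul, ← htd]; ring
        nlinarith
      have hu2 : p n ≤ (i:ℝ)*δ := by
        have : t - 2*δ ≤ (i:ℝ)*δ := by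
          rw [hicast]
          calc t - 2*δ = (t/δ - 2) * δ := by rw [sub_mul, ← htd]
            _ ≤ ((⌈t/δ⌉₊ : ℝ) - 2) * δ := by
                apply mul_le_mul_of_nonneg_right (by linarith) hδpos.le
        linarith
      obtain ⟨m, hmn, hmo1, hmo2⟩ := cross_lemma (fun m => -p m) (-t) (-(((i:ℝ)*δ) + c j * δ))
          (c j * δ) n
          (fun m hm => by
            show |(-p (m+1)) - (-p m)| < c j * δ
            have h := hstep' m hm
            calc |(-p (m+1)) - (-p m)| = |p (m+1) - p m| := by
                  rw [show (-p (m+1)) - (-p m) = -(p (m+1) - p m) from by ring, abs_neg]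
              _ < c j * δ := h)
          htp.neg (by linarith)
          (by show -(((i:ℝ)*δ) + c j * δ) + c j * δ ≤ -p n; linarith)
      have hpm1 : (i:ℝ)*δ < p m := by linarith [hmo2]
      have hpm2 : p m < (i:ℝ)*δ + c j * δ := by linarith [hmo1]
      have hiU : p m ∈ U := by
        rw [hUdef]
        simp only [Set.mem_iUnion]
        refine ⟨j, k, ?_, i, ?_, ?_⟩
        · exact Finset.mem_Icc.mpr ⟨hkw1, hkw2⟩
        · apply Finset.mem_range.mpr
          have : i ≤ ⌈t/δ⌉₊ := by omega
          have h2 : ⌈t/δ⌉₊ ≤ 2^k := Nat.ceil_le.mpr htδ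
          omega
        · exact ⟨hpm1, hpm2⟩
      exact (hpE m (by omega)).2 hiU
    · -- p n > t : crossing above t
      have hd : p n - t ≥ 4 * δ := by
        have habs : |p n - t| = p n - t := abs_of_pos (by linarith)
        nlinarith [hdistlow, h4δ]
      set i : ℕ := ⌊t/δ⌋₊ + 1 with hidef
      have hicast : (i:ℝ) = (⌊t/δ⌋₊ : ℝ) + 1 := by rw [hidef]; push_cast; ring
      have hfloorle : (⌊t/δ⌋₊ : ℝ) ≤ t/δ := Nat.floor_le (by positivity)
      have hfloorlt : t/δ < (⌊t/δ⌋₊ : ℝ) + 1 := Nat.lt_floor_add_one _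
      have htd : t = t/δ * δ := (div_mul_cancel₀ t hδpos.ne').symm
      have hu1 : t ≤ (i:ℝ)*δ := by
        rw [hicast]
        calc t = t/δ * δ := htd
          _ ≤ ((⌊t/δ⌋₊ : ℝ) + 1) * δ := by
              apply mul_le_mul_of_nonneg_right (by linarith) hδpos.le
      have hu2 : (i:ℝ)*δ + c j * δ ≤ p n := by
        have : (i:ℝ)*δ ≤ t + δ := by
          rw [hicast]
          calc ((⌊t/δ⌋₊ : ℝ) + 1) * δ ≤ (t/δ + 1) * δ := by
                apply mul_le_mul_of_nonneg_right (by linarith) hδpos.le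
            _ = t + δ := by rw [add_mul, ← htd]; ring
        nlinarith
      obtain ⟨m, hmn, hmo1, hmo2⟩ := cross_lemma p t ((i:ℝ)*δ) (c j * δ) n hstep' htp hu1 hu2
      have hiU : p m ∈ U := by
        rw [hUdef]
        simp only [Set.mem_iUnion]
        refine ⟨j, k, ?_, i, ?_, ?_⟩
        · exact Finset.mem_Icc.mpr ⟨hkw1, hkw2⟩
        · apply Finset.mem_range.mpr
          have h2 : ⌊t/δ⌋₊ ≤ 2^k := by
            have h3 := Nat.floor_le_floor htδ
            rwa [Nat.floor_natCast] at h3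
          omega
        · exact ⟨hmo1, hmo2⟩
      exact (hpE m (by omega)).2 hiU
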